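/- Let X, Y be metric spaces, w a weight on X, and f: X → Y with B_f = sup_{z∈X} D*f(z)/w(z) < ∞. Then f is Lipschitz from the weighted distance d_w on X to the inner (length) distance d₁ on Y: d₁(f(x), f(y)) ≤ B_f · d_w(x,y) for all x, y ∈ X for which Γ(x,y) ≠ ∅. -/

import Mathlib

open Set Filter Metric ENNReal NNReal

/-- `D* f x`: upper dilation of `f` at `x` (0 at isolated points). -/
noncomputable def Dstar {X Y : Type*} [MetricSpace X] [MetricSpace Y] (f : X → Y) (x : X) :
    ℝ≥0∞ :=
  Filter.limsup (fun y => edist (f x) (f y) / edist x y) (nhdsWithin x {x}ᶜ)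

/-- A curve parametrized on `[0,1]` joining `x` to `y`. -/
def IsCurveFrom {X : Type*} [MetricSpace X] (γ : ℝ → X) (x y : X) : Prop :=
  ContinuousOn γ (Set.Icc 0 1) ∧ γ 0 = x ∧ γ 1 = y

/-- Rectifiability of a curve parametrized on `[0,1]`. -/
def RectifiableCurve {X : Type*} [MetricSpace X] (γ : ℝ → X) : Prop :=
  eVariationOn γ (Set.Icc 0 1) ≠ ⊤

/-- `I` is the curve integral of `g` along `γ : [0,1] → X` (limit of Riemann sums with respect
to arclength). -/
def IsCurveIntegral {X : Type*} [MetricSpace X] (γ : ℝ → X) (g : X → ℝ) (I : ℝ) : Prop :=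
  ∀ ε > 0, ∃ δ > 0, ∀ n : ℕ, ∀ t s : ℕ → ℝ,
    0 < n → t 0 = 0 → t n = 1 →
    (∀ i < n, t i < t (i + 1)) →
    (∀ i < n, t (i + 1) - t i < δ) →
    (∀ i < n, s i ∈ Set.Icc (t i) (t (i + 1))) →
    |I - ∑ i ∈ Finset.range n,
        g (γ (s i)) * (eVariationOn γ (Set.Icc (t i) (t (i + 1)))).toReal| < ε

/-- The weighted distance `d_w`. -/
noncomputable def wDist {X : Type*} [MetricSpace X] (w : X → ℝ) (x y : X) : ℝ :=
  sInf {I | ∃ γ : ℝ → X, IsCurveFrom γ x y ∧ RectifiableCurve γ ∧ IsCurveIntegral γ w I}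

/-- The inner (length) distance `d₁`. -/
noncomputable def innerDist {Y : Type*} [MetricSpace Y] (u v : Y) : ℝ :=
  sInf {L | ∃ δ : ℝ → Y, IsCurveFrom δ u v ∧ eVariationOn δ (Set.Icc 0 1) = ENNReal.ofReal L}

/-- The class `RO^K_w(X,Y)` of regularly oscillating mappings. -/
def RegOsc {X Y : Type*} [MetricSpace X] [MetricSpace Y] (w : X → ℝ) (K : ℝ) (f : X → Y) :
    Prop :=
  (∀ x, Dstar f x ≠ ⊤) ∧
  (∀ x : X, ∀ r : ℝ, 0 < r → r < w x → Bornology.IsBounded (f '' Metric.ball x r)) ∧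
  (∀ x : X, ∀ r : ℝ, 0 < r → r < w x →
    Dstar f x ≤ ENNReal.ofReal ((K / r) * ⨆ y : Metric.ball x r, dist (f x) (f y)))



section AuxLemmas
variable {X : Type*} [MetricSpace X] {Y : Type*} [MetricSpace Y]

lemma loc_of_Dstar_lt {f : X → Y} {z : X} {c : ℝ≥0∞} (h : Dstar f z < c) :
    ∃ ρ > (0:ℝ), ∀ u, dist z u < ρ → edist (f z) (f u) ≤ c * edist z u := by
  have hev : ∀ᶠ u in nhdsWithin z {z}ᶜ, edist (f z) (f u) / edist z u < c :=
    Filter.eventually_lt_of_limsup_lt h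
  rw [eventually_nhdsWithin_iff] at hev
  rw [Metric.eventually_nhds_iff] at hev
  obtain ⟨ρ, hρ, hball⟩ := hev
  refine ⟨ρ, hρ, fun u hu => ?_⟩
  rcases eq_or_ne u z with rfl | hne
  · simp
  · have h2 := hball (by rwa [dist_comm] at hu) (by simpa using hne)
    have hz : edist z u ≠ 0 := by simpa using (Ne.symm hne)
    have ht : edist z u ≠ ⊤ := edist_ne_top _ _
    exact le_of_lt ((ENNReal.div_lt_iff (Or.inl hz) (Or.inl ht)).mp h2)

lemma evar_Icc_add_Icc_ (γ : ℝ → X) {a b c : ℝ} (hab : a ≤ b) (hbc : b ≤ c) :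
    eVariationOn γ (Icc a b) + eVariationOn γ (Icc b c) = eVariationOn γ (Icc a c) := by
  have := eVariationOn.Icc_add_Icc γ (s := Icc a c) hab hbc ⟨hab, hbc⟩
  simpa [Set.Icc_inter_Icc, max_self, min_eq_right hbc, max_eq_right hab, min_self,
    min_eq_left hbc] using this

lemma evar_sum_pieces (γ : ℝ → X) (t : ℕ → ℝ) :
    ∀ n : ℕ, (∀ i < n, t i ≤ t (i + 1)) →
      ∑ i ∈ Finset.range n, eVariationOn γ (Icc (t i) (t (i + 1)))
        = eVariationOn γ (Icc (t 0) (t n)) := by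
  intro n
  induction n with
  | zero =>
    intro _
    rw [Set.Icc_self]
    simp [eVariationOn.subsingleton γ (Set.subsingleton_singleton)]
  | succ m ih =>
    intro h
    have h0m : t 0 ≤ t m := by
      clear ih
      induction m with
      | zero => exact le_refl _
      | succ k ihk =>
        exact le_trans (ihk (fun i hi => h i (by omega))) (h k (by omega))
    rw [Finset.sum_range_succ, ih (fun i hi => h i (by omega)),
      evar_Icc_add_Icc_ γ h0m (h m (by omega))]

lemma chord_bound (f : X → Y) (γ : ℝ → X) {a b : ℝ} (hab : a ≤ b) {c : ℝ≥0∞}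
    (hγ : ContinuousOn γ (Icc a b))
    (hloc : ∀ t ∈ Icc a b, ∃ ρ > (0:ℝ), ∀ u, dist (γ t) u < ρ →
      edist (f (γ t)) (f u) ≤ c * edist (γ t) u) :
    edist (f (γ a)) (f (γ b)) ≤ c * eVariationOn γ (Icc a b) := by
  set T : Set ℝ := {t | t ∈ Icc a b ∧
    edist (f (γ a)) (f (γ t)) ≤ c * eVariationOn γ (Icc a t)} with hT
  have haT : a ∈ T := ⟨⟨le_refl a, hab⟩, by simp⟩
  have hTne : T.Nonempty := ⟨a, haT⟩
  have hTbd : BddAbove T := ⟨b, fun t ht => ht.1.2⟩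
  set m := sSup T with hm
  have hma : a ≤ m := le_csSup hTbd haT
  have hmb : m ≤ b := csSup_le hTne (fun t ht => ht.1.2)
  have hmI : m ∈ Icc a b := ⟨hma, hmb⟩
  obtain ⟨ρ, hρ, hest⟩ := hloc m hmI
  have hcont := hγ m hmI
  rw [Metric.continuousWithinAt_iff] at hcont
  obtain ⟨η, hη, hcl⟩ := hcont ρ hρ
  -- m ∈ T
  have hmT : m ∈ T := by
    obtain ⟨t, htT, htgt⟩ : ∃ t ∈ T, m - η < t := by
      by_contra hcon
      push_neg at hcon
      have : m ≤ m - η := csSup_le hTne hcon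
      linarith
    have htm : t ≤ m := le_csSup hTbd htT
    have hdist : dist (γ m) (γ t) < ρ := by
      have := hcl htT.1 (by rw [Real.dist_eq, abs_lt]; constructor <;> linarith)
      rwa [dist_comm] at this
    refine ⟨hmI, ?_⟩
    calc edist (f (γ a)) (f (γ m))
        ≤ edist (f (γ a)) (f (γ t)) + edist (f (γ t)) (f (γ m)) := edist_triangle _ _ _
      _ ≤ c * eVariationOn γ (Icc a t) + c * edist (γ m) (γ t) := by
          refine add_le_add htT.2 ?_
          rw [edist_comm]
          exact hest (γ t) hdist
      _ ≤ c * eVariationOn γ (Icc a t) + c * eVariationOn γ (Icc t m) := by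
          gcongr
          exact eVariationOn.edist_le γ (Set.right_mem_Icc.mpr htm) (Set.left_mem_Icc.mpr htm)
      _ = c * eVariationOn γ (Icc a m) := by
          rw [← mul_add, evar_Icc_add_Icc_ γ htT.1.1 htm]
  -- m = b
  have hmbeq : m = b := by
    by_contra hne
    have hmlt : m < b := lt_of_le_of_ne hmb hne
    set t := min b (m + η / 2) with htdef
    have htI : t ∈ Icc a b := ⟨le_trans hma (le_min hmlt.le (by linarith)), min_le_left _ _⟩
    have htm : m ≤ t := le_min hmlt.le (by linarith)
    have htlt : m < t := lt_min hmlt (by linarith)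
    have hdist : dist (γ m) (γ t) < ρ := by
      have : dist t m < η := by
        rw [Real.dist_eq, abs_lt]
        have : t ≤ m + η / 2 := min_le_right _ _
        constructor <;> linarith
      have := hcl htI this
      rwa [dist_comm] at this
    have htT : t ∈ T := by
      refine ⟨htI, ?_⟩
      calc edist (f (γ a)) (f (γ t))
          ≤ edist (f (γ a)) (f (γ m)) + edist (f (γ m)) (f (γ t)) := edist_triangle _ _ _
        _ ≤ c * eVariationOn γ (Icc a m) + c * edist (γ m) (γ t) := add_le_add hmT.2 (hest (γ t) hdist)
        _ ≤ c * eVariationOn γ (Icc a m) + c * eVariationOn γ (Icc m t) := by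
            gcongr
            exact eVariationOn.edist_le γ (Set.left_mem_Icc.mpr htm) (Set.right_mem_Icc.mpr htm)
        _ = c * eVariationOn γ (Icc a t) := by rw [← mul_add, evar_Icc_add_Icc_ γ hma htm]
    have : t ≤ m := le_csSup hTbd htT
    linarith
  have := hmT.2
  rwa [hmbeq] at this

lemma evar_comp_le (f : X → Y) (γ : ℝ → X) {a b : ℝ} (hab : a ≤ b) {c : ℝ≥0∞}
    (hγ : ContinuousOn γ (Icc a b))
    (hloc : ∀ t ∈ Icc a b, ∃ ρ > (0:ℝ), ∀ u, dist (γ t) u < ρ →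
      edist (f (γ t)) (f u) ≤ c * edist (γ t) u) :
    eVariationOn (f ∘ γ) (Icc a b) ≤ c * eVariationOn γ (Icc a b) := by
  rw [eVariationOn]
  refine iSup_le ?_
  rintro ⟨n, u, hu, hus⟩
  have key : ∀ i, edist ((f ∘ γ) (u (i+1))) ((f ∘ γ) (u i))
      ≤ c * eVariationOn γ (Icc (u i) (u (i+1))) := by
    intro i
    have h1 : u i ≤ u (i+1) := hu (Nat.le_succ i)
    have h2 : Icc (u i) (u (i+1)) ⊆ Icc a b := Set.Icc_subset_Icc (hus i).1 (hus (i+1)).2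
    have := chord_bound f γ h1 (hγ.mono h2) (fun t ht => hloc t (h2 ht))
    simpa [edist_comm] using this
  calc ∑ i ∈ Finset.range n, edist ((f ∘ γ) (u (i+1))) ((f ∘ γ) (u i))
      ≤ ∑ i ∈ Finset.range n, c * eVariationOn γ (Icc (u i) (u (i+1))) :=
        Finset.sum_le_sum (fun i _ => key i)
    _ = c * ∑ i ∈ Finset.range n, eVariationOn γ (Icc (u i) (u (i+1))) := by
        rw [Finset.mul_sum]
    _ = c * eVariationOn γ (Icc (u 0) (u n)) := by
        rw [evar_sum_pieces γ u n (fun i _ => hu (Nat.le_succ i))]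
    _ ≤ c * eVariationOn γ (Icc a b) := by
        gcongr
        exact eVariationOn.mono γ (Set.Icc_subset_Icc (hus 0).1 (hus n).2)


lemma evar_small_right (γ : ℝ → X) {t₀ t₁ : ℝ} (h01 : t₀ < t₁)
    (hfin : eVariationOn γ (Icc t₀ t₁) ≠ ⊤) {ε : ℝ} (hε : 0 < ε) :
    ∃ s₀ ∈ Ioc t₀ t₁, ∀ s ∈ Ioc t₀ s₀,
      eVariationOn γ (Icc t₀ s) ≤ edist (γ t₀) (γ s) + ENNReal.ofReal ε := by
  set W := eVariationOn γ (Icc t₀ t₁) with hW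
  by_cases hsmall : W ≤ ENNReal.ofReal ε
  · refine ⟨t₁, ⟨h01, le_refl _⟩, fun s hs => ?_⟩
    calc eVariationOn γ (Icc t₀ s) ≤ W := eVariationOn.mono γ (Set.Icc_subset_Icc le_rfl hs.2)
      _ ≤ ENNReal.ofReal ε := hsmall
      _ ≤ edist (γ t₀) (γ s) + ENNReal.ofReal ε := le_add_self
  · push_neg at hsmall
    have hWne : W ≠ 0 := by
      intro h0; rw [h0] at hsmall; exact (not_lt.mpr zero_le) hsmall
    have hεne : ENNReal.ofReal ε ≠ 0 := by simp [hε, le_of_lt]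
    have hlt : W - ENNReal.ofReal ε < W := ENNReal.sub_lt_self hfin hWne hεne
    have hlt2 : ∃ p : ℕ × {u : ℕ → ℝ // Monotone u ∧ ∀ i, u i ∈ Icc t₀ t₁},
        W - ENNReal.ofReal ε
          < ∑ i ∈ Finset.range p.1, edist (γ (p.2.1 (i+1))) (γ (p.2.1 i)) := by
      rw [← lt_iSup_iff, ← eVariationOn]
      exact hlt
    obtain ⟨⟨n, u, hu, hus⟩, hsum⟩ := hlt2
    simp only at hsum
    -- if all chain points are t₀ the sum is 0, contradiction
    have hex : ∃ i, t₀ < u i := by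
      by_contra hcon
      push_neg at hcon
      have hzero : ∀ i, u i = t₀ := fun i => le_antisymm (hcon i) (hus i).1
      rw [Finset.sum_eq_zero (fun i _ => by rw [hzero i, hzero (i+1), edist_self])] at hsum
      exact (not_lt.mpr zero_le) hsum
    set k := Nat.find hex with hk
    have hk0 : t₀ < u k := Nat.find_spec hex
    have hkmin : ∀ i < k, u i = t₀ := fun i hi =>
      le_antisymm (not_lt.mp (Nat.find_min hex hi)) (hus i).1
    have hkn : k ≤ n := by
      by_contra hcon
      push_neg at hcon
      have : ∀ i ∈ Finset.range n, edist (γ (u (i+1))) (γ (u i)) = 0 := by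
        intro i hi
        rw [Finset.mem_range] at hi
        rw [hkmin i (by omega), hkmin (i+1) (by omega), edist_self]
      rw [Finset.sum_eq_zero this] at hsum
      exact (not_lt.mpr zero_le) hsum
    refine ⟨u k, ⟨hk0, (hus k).2⟩, fun s hs => ?_⟩
    have hsk : s ≤ u k := hs.2
    have hst₀ : t₀ < s := hs.1
    have hskt₁ : s ≤ t₁ := le_trans hsk (hus k).2
    -- bound the sum
    have hsplit : ∑ i ∈ Finset.range n, edist (γ (u (i+1))) (γ (u i))
        ≤ edist (γ t₀) (γ s) + (eVariationOn γ (Icc s (u k)) + eVariationOn γ (Icc (u k) t₁)) := by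
      have htail : ∑ i ∈ Finset.Ico k n, edist (γ (u (i+1))) (γ (u i))
          ≤ eVariationOn γ (Icc (u k) t₁) := by
        rw [Finset.sum_Ico_eq_sum_range]
        have := eVariationOn.sum_le (f := γ) (s := Icc (u k) t₁) (n := n - k) (u := fun i => u (k + i))
          (fun i j hij => hu (by omega)) (fun i => ⟨hu (Nat.le_add_right k i), (hus (k+i)).2⟩)
        refine le_trans (le_of_eq (Finset.sum_congr rfl (fun i _ => by ring_nf))) this
      rcases Nat.eq_zero_or_pos k with hk0' | hkpos
      · -- whole chain is in [u 0, t₁] ⊆ [s, t₁]... but we need the edist term anyway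
        have : ∑ i ∈ Finset.range n, edist (γ (u (i+1))) (γ (u i))
            ≤ eVariationOn γ (Icc (u k) t₁) := by
          rw [hk0'] at htail ⊢
          rw [Finset.range_eq_Ico]
          exact htail
        exact le_trans this (by
          calc eVariationOn γ (Icc (u k) t₁)
              ≤ edist (γ t₀) (γ s) + eVariationOn γ (Icc s (u k)) + eVariationOn γ (Icc (u k) t₁) :=
                le_add_self
            _ = _ := by ring)
      · obtain ⟨j, hj⟩ : ∃ j, k = j + 1 := ⟨k - 1, by omega⟩
        have hhead : ∑ i ∈ Finset.range k, edist (γ (u (i+1))) (γ (u i))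
            = edist (γ (u k)) (γ t₀) := by
          rw [hj, Finset.sum_range_succ]
          have : ∑ i ∈ Finset.range j, edist (γ (u (i+1))) (γ (u i)) = 0 :=
            Finset.sum_eq_zero (fun i hi => by
              rw [Finset.mem_range] at hi
              rw [hkmin i (by omega), hkmin (i+1) (by omega), edist_self])
          rw [this, hkmin j (by omega), zero_add, ← hj]
        have hheadle : edist (γ (u k)) (γ t₀)
            ≤ edist (γ t₀) (γ s) + eVariationOn γ (Icc s (u k)) := by
          calc edist (γ (u k)) (γ t₀) = edist (γ t₀) (γ (u k)) := edist_comm _ _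
            _ ≤ edist (γ t₀) (γ s) + edist (γ s) (γ (u k)) := edist_triangle _ _ _
            _ ≤ edist (γ t₀) (γ s) + eVariationOn γ (Icc s (u k)) := by
                gcongr
                exact eVariationOn.edist_le γ (Set.left_mem_Icc.mpr hsk) (Set.right_mem_Icc.mpr hsk)
        calc ∑ i ∈ Finset.range n, edist (γ (u (i+1))) (γ (u i))
            = ∑ i ∈ Finset.range k, edist (γ (u (i+1))) (γ (u i))
              + ∑ i ∈ Finset.Ico k n, edist (γ (u (i+1))) (γ (u i)) := by
              rw [Finset.range_eq_Ico, ← Finset.sum_Ico_consecutive _ (Nat.zero_le k) hkn, Finset.range_eq_Ico]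
          _ ≤ (edist (γ t₀) (γ s) + eVariationOn γ (Icc s (u k))) + eVariationOn γ (Icc (u k) t₁) := by
              rw [hhead]; exact add_le_add hheadle htail
          _ = _ := by ring
    rw [evar_Icc_add_Icc_ γ hsk (hus k).2] at hsplit
    -- now conclude
    have hVs : eVariationOn γ (Icc s t₁) ≠ ⊤ := by
      intro h
      exact hfin (top_le_iff.mp
        (h ▸ eVariationOn.mono γ (Set.Icc_subset_Icc hst₀.le le_rfl)))
    have hWsplit : eVariationOn γ (Icc t₀ s) + eVariationOn γ (Icc s t₁) = W :=
      evar_Icc_add_Icc_ γ hst₀.le hskt₁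
    have h1 : W < (edist (γ t₀) (γ s) + eVariationOn γ (Icc s t₁)) + ENNReal.ofReal ε := by
      have h2 : W - ENNReal.ofReal ε < edist (γ t₀) (γ s) + eVariationOn γ (Icc s t₁) :=
        lt_of_lt_of_le hsum hsplit
      by_cases hle : ENNReal.ofReal ε ≤ W
      · have := ENNReal.add_lt_add_right (by simp : ENNReal.ofReal ε ≠ ⊤) h2
        rwa [tsub_add_cancel_of_le hle] at this
      · push_neg at hle
        exact lt_of_lt_of_le hle le_add_self
    rw [← hWsplit] at h1
    have h2 : eVariationOn γ (Icc t₀ s) + eVariationOn γ (Icc s t₁)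
        < (edist (γ t₀) (γ s) + ENNReal.ofReal ε) + eVariationOn γ (Icc s t₁) := by
      calc eVariationOn γ (Icc t₀ s) + eVariationOn γ (Icc s t₁)
          < (edist (γ t₀) (γ s) + eVariationOn γ (Icc s t₁)) + ENNReal.ofReal ε := h1
        _ = (edist (γ t₀) (γ s) + ENNReal.ofReal ε) + eVariationOn γ (Icc s t₁) := by ring
    exact le_of_lt ((ENNReal.add_lt_add_iff_right hVs).mp h2)

lemma evar_neg (γ : ℝ → X) (a b : ℝ) :
    eVariationOn (fun r => γ (-r)) (Icc (-b) (-a)) = eVariationOn γ (Icc a b) := by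
  have h := eVariationOn.comp_eq_of_antitoneOn γ (fun r : ℝ => -r) (t := Icc (-b) (-a))
    (fun x _ y _ h => by dsimp; linarith)
  have himg : (fun r : ℝ => -r) '' Icc (-b) (-a) = Icc a b := by
    ext z
    simp only [Set.mem_image, Set.mem_Icc]
    constructor
    · rintro ⟨r, ⟨h1, h2⟩, rfl⟩; constructor <;> linarith
    · rintro ⟨h1, h2⟩; exact ⟨-z, ⟨by linarith, by linarith⟩, by ring⟩
  rw [himg] at h
  exact h

lemma evar_small_left (γ : ℝ → X) {t₀ t₁ : ℝ} (h01 : t₀ < t₁)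
    (hfin : eVariationOn γ (Icc t₀ t₁) ≠ ⊤) {ε : ℝ} (hε : 0 < ε) :
    ∃ s₀ ∈ Ico t₀ t₁, ∀ s ∈ Ico s₀ t₁,
      eVariationOn γ (Icc s t₁) ≤ edist (γ s) (γ t₁) + ENNReal.ofReal ε := by
  have hfin' : eVariationOn (fun r => γ (-r)) (Icc (-t₁) (-t₀)) ≠ ⊤ := by
    rw [evar_neg]; exact hfin
  obtain ⟨s₀', hs₀', hbound⟩ := evar_small_right (fun r => γ (-r)) (by linarith : -t₁ < -t₀)
    hfin' hε
  refine ⟨-s₀', ⟨by linarith [hs₀'.2], by linarith [hs₀'.1]⟩, fun s hs => ?_⟩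
  have hmem : -s ∈ Ioc (-t₁) s₀' := ⟨by linarith [hs.2], by linarith [hs.1]⟩
  have := hbound (-s) hmem
  rw [show eVariationOn (fun r => γ (-r)) (Icc (-t₁) (-s))
      = eVariationOn γ (Icc s t₁) from evar_neg γ s t₁] at this
  simpa [edist_comm] using this

lemma variation_continuousOn (γ : ℝ → X) (hγ : ContinuousOn γ (Icc 0 1))
    (hfin : eVariationOn γ (Icc 0 1) ≠ ⊤) :
    ContinuousOn (fun t => (eVariationOn γ (Icc 0 t)).toReal) (Icc 0 1) := by
  have hfinsub : ∀ p q : ℝ, 0 ≤ p → q ≤ 1 → eVariationOn γ (Icc p q) ≠ ⊤ := by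
    intro p q hp hq h
    exact hfin (top_le_iff.mp (h ▸ eVariationOn.mono γ (Set.Icc_subset_Icc hp hq)))
  intro t₀ ht₀
  rw [Metric.continuousWithinAt_iff]
  intro ε hε
  have hε2 : 0 < ε / 2 := by linarith
  -- right-side control
  obtain ⟨δR, hδR, hright⟩ : ∃ δR > 0, ∀ t ∈ Icc (0:ℝ) 1, t₀ < t → t - t₀ < δR →
      eVariationOn γ (Icc t₀ t) ≤ edist (γ t₀) (γ t) + ENNReal.ofReal (ε/2) := by
    rcases eq_or_lt_of_le ht₀.2 with h1 | h1
    · exact ⟨1, one_pos, fun t ht htgt _ => absurd (htgt.trans_le ht.2) (by rw [h1]; simp)⟩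
    · obtain ⟨s₀, hs₀, hb⟩ := evar_small_right γ h1 (hfinsub t₀ 1 ht₀.1 le_rfl) hε2
      exact ⟨s₀ - t₀, by linarith [hs₀.1], fun t ht htgt hlt =>
        hb t ⟨htgt, by linarith⟩⟩
  -- left-side control
  obtain ⟨δL, hδL, hleft⟩ : ∃ δL > 0, ∀ t ∈ Icc (0:ℝ) 1, t < t₀ → t₀ - t < δL →
      eVariationOn γ (Icc t t₀) ≤ edist (γ t) (γ t₀) + ENNReal.ofReal (ε/2) := by
    rcases eq_or_lt_of_le ht₀.1 with h1 | h1
    · exact ⟨1, one_pos, fun t ht htlt _ => absurd (ht.1.trans_lt htlt) (by rw [← h1]; simp)⟩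
    · obtain ⟨s₀, hs₀, hb⟩ := evar_small_left γ h1 (hfinsub 0 t₀ le_rfl ht₀.2) hε2
      exact ⟨t₀ - s₀, by linarith [hs₀.2], fun t ht htlt hlt =>
        hb t ⟨by linarith, htlt⟩⟩
  -- continuity of γ at t₀
  obtain ⟨δγ, hδγ, hγc⟩ : ∃ δγ > 0, ∀ t ∈ Icc (0:ℝ) 1, dist t t₀ < δγ →
      dist (γ t) (γ t₀) < ε / 2 := by
    have := hγ t₀ ht₀
    rw [Metric.continuousWithinAt_iff] at this
    obtain ⟨δ, hδ, h⟩ := this (ε/2) hε2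
    exact ⟨δ, hδ, fun t ht hd => h ht hd⟩
  refine ⟨min (min δL δR) δγ, by positivity, fun t ht hd => ?_⟩
  rw [Real.dist_eq] at hd ⊢
  have hdγ : dist t t₀ < δγ := lt_of_lt_of_le (by rw [Real.dist_eq]; exact hd) (min_le_right _ _)
  have habs := abs_lt.mp hd
  have hdL : t₀ - t < δL := by
    have h1 := min_le_left (min δL δR) δγ
    have h2 := min_le_left δL δR
    linarith [habs.1]
  have hdR : t - t₀ < δR := by
    have h1 := min_le_left (min δL δR) δγ
    have h2 := min_le_right δL δR
    linarith [habs.2]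
  rcases lt_trichotomy t t₀ with hlt | heq | hgt
  · -- t < t₀
    have h1 : eVariationOn γ (Icc t t₀) ≤ edist (γ t) (γ t₀) + ENNReal.ofReal (ε/2) :=
      hleft t ht hlt hdL
    have hadd : eVariationOn γ (Icc 0 t) + eVariationOn γ (Icc t t₀) =
        eVariationOn γ (Icc 0 t₀) := evar_Icc_add_Icc_ γ ht.1 hlt.le
    have hf1 : eVariationOn γ (Icc 0 t) ≠ ⊤ := hfinsub 0 t le_rfl ht.2
    have hf2 : eVariationOn γ (Icc t t₀) ≠ ⊤ := hfinsub t t₀ ht.1 ht₀.2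
    have hval : (eVariationOn γ (Icc 0 t₀)).toReal - (eVariationOn γ (Icc 0 t)).toReal
        = (eVariationOn γ (Icc t t₀)).toReal := by
      rw [← hadd, ENNReal.toReal_add hf1 hf2]; ring
    have hsmall : (eVariationOn γ (Icc t t₀)).toReal < ε := by
      have h2 : (eVariationOn γ (Icc t t₀)).toReal
          ≤ (edist (γ t) (γ t₀) + ENNReal.ofReal (ε/2)).toReal := by
        apply ENNReal.toReal_mono _ h1
        exact ENNReal.add_ne_top.mpr ⟨edist_ne_top _ _, ENNReal.ofReal_ne_top⟩
      rw [ENNReal.toReal_add (edist_ne_top _ _) ENNReal.ofReal_ne_top,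
        ENNReal.toReal_ofReal hε2.le] at h2
      have h3 : (edist (γ t) (γ t₀)).toReal = dist (γ t) (γ t₀) := by
        rw [edist_dist, ENNReal.toReal_ofReal dist_nonneg]
      rw [h3] at h2
      have := hγc t ht hdγ
      linarith
    rw [abs_lt]
    constructor <;> nlinarith [hval, hsmall, ENNReal.toReal_nonneg
      (a := eVariationOn γ (Icc t t₀))]
  · rw [heq]; simpa using hε
  · -- t₀ < t
    have h1 : eVariationOn γ (Icc t₀ t) ≤ edist (γ t₀) (γ t) + ENNReal.ofReal (ε/2) :=
      hright t ht hgt hdR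
    have hadd : eVariationOn γ (Icc 0 t₀) + eVariationOn γ (Icc t₀ t) =
        eVariationOn γ (Icc 0 t) := evar_Icc_add_Icc_ γ ht₀.1 hgt.le
    have hf1 : eVariationOn γ (Icc 0 t₀) ≠ ⊤ := hfinsub 0 t₀ le_rfl ht₀.2
    have hf2 : eVariationOn γ (Icc t₀ t) ≠ ⊤ := hfinsub t₀ t ht₀.1 ht.2
    have hval : (eVariationOn γ (Icc 0 t)).toReal - (eVariationOn γ (Icc 0 t₀)).toReal
        = (eVariationOn γ (Icc t₀ t)).toReal := by
      rw [← hadd, ENNReal.toReal_add hf1 hf2]; ring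
    have hsmall : (eVariationOn γ (Icc t₀ t)).toReal < ε := by
      have h2 : (eVariationOn γ (Icc t₀ t)).toReal
          ≤ (edist (γ t₀) (γ t) + ENNReal.ofReal (ε/2)).toReal := by
        apply ENNReal.toReal_mono _ h1
        exact ENNReal.add_ne_top.mpr ⟨edist_ne_top _ _, ENNReal.ofReal_ne_top⟩
      rw [ENNReal.toReal_add (edist_ne_top _ _) ENNReal.ofReal_ne_top,
        ENNReal.toReal_ofReal hε2.le] at h2
      have h3 : (edist (γ t₀) (γ t)).toReal = dist (γ t₀) (γ t) := by
        rw [edist_dist, ENNReal.toReal_ofReal dist_nonneg]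
      rw [h3] at h2
      have := hγc t ht hdγ
      rw [dist_comm] at this
      linarith
    rw [abs_lt]
    constructor <;> nlinarith [hval, hsmall, ENNReal.toReal_nonneg
      (a := eVariationOn γ (Icc t₀ t))]

lemma reparam (γ : ℝ → X) (hγ : ContinuousOn γ (Icc 0 1))
    (hfin : eVariationOn γ (Icc 0 1) ≠ ⊤) (hpos : eVariationOn γ (Icc 0 1) ≠ 0) :
    ∃ γt : ℝ → X, ContinuousOn γt (Icc 0 1) ∧ γt 0 = γ 0 ∧ γt 1 = γ 1 ∧
      ∀ a b : ℝ, 0 ≤ a → a ≤ b → b ≤ 1 → eVariationOn γt (Icc a b)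
        = ENNReal.ofReal ((eVariationOn γ (Icc 0 1)).toReal * (b - a)) := by
  set Vr : ℝ → ℝ := fun t => (eVariationOn γ (Icc 0 t)).toReal with hVr
  set ℓ : ℝ := Vr 1 with hℓ
  have hfinsub : ∀ p q : ℝ, 0 ≤ p → q ≤ 1 → eVariationOn γ (Icc p q) ≠ ⊤ := by
    intro p q hp hq h
    exact hfin (top_le_iff.mp (h ▸ eVariationOn.mono γ (Set.Icc_subset_Icc hp hq)))
  have hℓpos : 0 < ℓ := by
    rcases (ENNReal.toReal_pos hpos hfin) with h
    exact h
  have hV0 : Vr 0 = 0 := by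
    rw [hVr]
    simp only [Set.Icc_self]
    rw [eVariationOn.subsingleton γ (Set.subsingleton_singleton)]
    simp
  have hVcont : ContinuousOn Vr (Icc 0 1) := variation_continuousOn γ hγ hfin
  have hVmono : MonotoneOn Vr (Icc 0 1) := by
    intro p hp q hq hpq
    exact ENNReal.toReal_mono (hfinsub 0 q le_rfl hq.2)
      (eVariationOn.mono γ (Set.Icc_subset_Icc le_rfl hpq))
  have hsub : ∀ p q : ℝ, 0 ≤ p → p ≤ q → q ≤ 1 →
      eVariationOn γ (Icc p q) = ENNReal.ofReal (Vr q - Vr p) := by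
    intro p q hp hpq hq
    have hadd := evar_Icc_add_Icc_ γ hp hpq
    have hf1 : eVariationOn γ (Icc 0 p) ≠ ⊤ := hfinsub 0 p le_rfl (hpq.trans hq)
    have hf2 : eVariationOn γ (Icc p q) ≠ ⊤ := hfinsub p q hp hq
    have : (eVariationOn γ (Icc p q)).toReal = Vr q - Vr p := by
      rw [hVr]
      simp only
      rw [← hadd, ENNReal.toReal_add hf1 hf2]
      ring
    rw [← this, ENNReal.ofReal_toReal hf2]
  have hflat : ∀ p q : ℝ, p ∈ Icc (0:ℝ) 1 → q ∈ Icc (0:ℝ) 1 → Vr p = Vr q → γ p = γ q := by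
    have key : ∀ p q : ℝ, p ∈ Icc (0:ℝ) 1 → q ∈ Icc (0:ℝ) 1 → p ≤ q → Vr p = Vr q → γ p = γ q := by
      intro p q hp hq hpq hVpq
      have h1 : eVariationOn γ (Icc p q) = 0 := by
        rw [hsub p q hp.1 hpq hq.2, hVpq]
        simp
      have h2 : edist (γ p) (γ q) ≤ 0 := h1 ▸
        eVariationOn.edist_le γ (Set.left_mem_Icc.mpr hpq) (Set.right_mem_Icc.mpr hpq)
      exact edist_eq_zero.mp (le_antisymm h2 zero_le)
    intro p q hp hq hVpq
    rcases le_total p q with h | h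
    · exact key p q hp hq h hVpq
    · exact (key q p hq hp h hVpq.symm).symm
  -- definition of g
  set S : ℝ → Set ℝ := fun r => {t | t ∈ Icc (0:ℝ) 1 ∧ Vr t = ℓ * r} with hS
  have hSne : ∀ r ∈ Icc (0:ℝ) 1, (S r).Nonempty := by
    intro r hr
    have : ℓ * r ∈ Icc (Vr 0) (Vr 1) := by
      rw [hV0]
      constructor
      · exact mul_nonneg hℓpos.le hr.1
      · rw [← hℓ]; nlinarith [hr.2]
    obtain ⟨t, ht, hVt⟩ := intermediate_value_Icc (by norm_num : (0:ℝ) ≤ 1) hVcont this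
    exact ⟨t, ht, hVt⟩
  have hSclosed : ∀ r, IsClosed (S r) := by
    intro r
    have : S r = Icc 0 1 ∩ Vr ⁻¹' {ℓ * r} := by
      ext t; simp [hS, Set.mem_Icc]
    rw [this]
    exact hVcont.preimage_isClosed_of_isClosed isClosed_Icc isClosed_singleton
  have hSbdd : ∀ r, BddBelow (S r) := fun r => ⟨0, fun t ht => ht.1.1⟩
  set g : ℝ → ℝ := fun r => sInf (S r) with hg
  have hgmem : ∀ r ∈ Icc (0:ℝ) 1, g r ∈ Icc (0:ℝ) 1 ∧ Vr (g r) = ℓ * r := by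
    intro r hr
    have := (hSclosed r).csInf_mem (hSne r hr) (hSbdd r)
    exact this
  have hgmono : ∀ r ∈ Icc (0:ℝ) 1, ∀ r' ∈ Icc (0:ℝ) 1, r ≤ r' → g r ≤ g r' := by
    intro r hr r' hr' hrr'
    rcases eq_or_lt_of_le hrr' with rfl | hlt
    · exact le_rfl
    · by_contra hcon
      push_neg at hcon
      have h1 : Vr (g r') ≤ Vr (g r) :=
        hVmono (hgmem r' hr').1 (hgmem r hr).1 hcon.le
      rw [(hgmem r hr).2, (hgmem r' hr').2] at h1
      nlinarith
  -- the reparametrized curve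
  set γt : ℝ → X := fun r => γ (g (max 0 (min 1 r))) with hγt
  have hclamp : ∀ r ∈ Icc (0:ℝ) 1, γt r = γ (g r) := by
    intro r hr
    rw [hγt]
    simp only
    rw [min_eq_right hr.2, max_eq_right hr.1]
  have hg0 : g 0 = 0 := by
    have h0S : (0:ℝ) ∈ S 0 := ⟨⟨le_rfl, by norm_num⟩, by rw [hV0]; ring⟩
    exact le_antisymm (csInf_le (hSbdd 0) h0S) (hgmem 0 ⟨le_rfl, by norm_num⟩).1.1
  -- main variation identity
  have hvar : ∀ a b : ℝ, 0 ≤ a → a ≤ b → b ≤ 1 →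
      eVariationOn γt (Icc a b) = ENNReal.ofReal (ℓ * (b - a)) := by
    intro a b ha hab hb
    have haI : a ∈ Icc (0:ℝ) 1 := ⟨ha, hab.trans hb⟩
    have hbI : b ∈ Icc (0:ℝ) 1 := ⟨ha.trans hab, hb⟩
    apply le_antisymm
    · rw [eVariationOn]
      refine iSup_le ?_
      rintro ⟨n, u, hu, hus⟩
      have huI : ∀ i, u i ∈ Icc (0:ℝ) 1 := fun i => ⟨ha.trans (hus i).1, (hus i).2.trans hb⟩
      have hterm : ∀ i, edist (γt (u (i+1))) (γt (u i))
          ≤ ENNReal.ofReal (ℓ * u (i+1) - ℓ * u i) := by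
        intro i
        rw [hclamp _ (huI (i+1)), hclamp _ (huI i)]
        have hgle : g (u i) ≤ g (u (i+1)) := hgmono _ (huI i) _ (huI (i+1)) (hu (Nat.le_succ i))
        have h1 : edist (γ (g (u (i+1)))) (γ (g (u i)))
            ≤ eVariationOn γ (Icc (g (u i)) (g (u (i+1)))) := by
          rw [edist_comm]
          exact eVariationOn.edist_le γ (Set.left_mem_Icc.mpr hgle) (Set.right_mem_Icc.mpr hgle)
        rw [hsub _ _ (hgmem _ (huI i)).1.1 hgle (hgmem _ (huI (i+1))).1.2] at h1
        rw [(hgmem _ (huI i)).2, (hgmem _ (huI (i+1))).2] at h1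
        exact h1
      calc ∑ i ∈ Finset.range n, edist (γt (u (i+1))) (γt (u i))
          ≤ ∑ i ∈ Finset.range n, ENNReal.ofReal (ℓ * u (i+1) - ℓ * u i) :=
            Finset.sum_le_sum (fun i _ => hterm i)
        _ = ENNReal.ofReal (∑ i ∈ Finset.range n, (ℓ * u (i+1) - ℓ * u i)) := by
            rw [ENNReal.ofReal_sum_of_nonneg]
            intro i _
            have := hu (Nat.le_succ i)
            nlinarith
        _ = ENNReal.ofReal (ℓ * u n - ℓ * u 0) := by
            rw [Finset.sum_range_sub (fun i => ℓ * u i)]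
        _ ≤ ENNReal.ofReal (ℓ * (b - a)) := by
            apply ENNReal.ofReal_le_ofReal
            nlinarith [(hus n).2, (hus 0).1]
    · -- lower bound
      have hkey : eVariationOn γ (Icc (g a) (g b)) ≤ eVariationOn γt (Icc a b) := by
        conv_lhs => rw [eVariationOn]
        refine iSup_le ?_
        rintro ⟨n, u, hu, hus⟩
        have hgab : g a ≤ g b := hgmono _ haI _ hbI hab
        have huI : ∀ i, u i ∈ Icc (0:ℝ) 1 :=
          fun i => ⟨(hgmem a haI).1.1.trans (hus i).1, (hus i).2.trans (hgmem b hbI).1.2⟩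
        set ρ : ℕ → ℝ := fun i => Vr (u i) / ℓ with hρ
        have hρI : ∀ i, ρ i ∈ Icc a b := by
          intro i
          have h1 : Vr (g a) ≤ Vr (u i) := hVmono (hgmem a haI).1 (huI i) (hus i).1
          have h2 : Vr (u i) ≤ Vr (g b) := hVmono (huI i) (hgmem b hbI).1 (hus i).2
          rw [(hgmem a haI).2] at h1
          rw [(hgmem b hbI).2] at h2
          constructor
          · rw [le_div_iff₀ hℓpos]; nlinarith
          · rw [div_le_iff₀ hℓpos]; nlinarith
        have hρmono : Monotone ρ := by
          intro i j hij
          have h := hVmono (huI i) (huI j) (hu hij)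
          exact (div_le_div_iff_of_pos_right hℓpos).mpr h
        have hρval : ∀ i, γt (ρ i) = γ (u i) := by
          intro i
          have hρI01 : ρ i ∈ Icc (0:ℝ) 1 :=
            ⟨ha.trans (hρI i).1, (hρI i).2.trans hb⟩
          rw [hclamp _ hρI01]
          apply hflat _ _ (hgmem _ hρI01).1 (huI i)
          rw [(hgmem _ hρI01).2, hρ]
          field_simp
        calc ∑ i ∈ Finset.range n, edist (γ (u (i+1))) (γ (u i))
            = ∑ i ∈ Finset.range n, edist (γt (ρ (i+1))) (γt (ρ i)) := by
              apply Finset.sum_congr rfl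
              intro i _
              rw [hρval (i+1), hρval i]
          _ ≤ eVariationOn γt (Icc a b) := eVariationOn.sum_le (f := γt) (n := n) hρmono hρI
      rw [hsub _ _ (hgmem a haI).1.1 (hgmono _ haI _ hbI hab) (hgmem b hbI).1.2,
        (hgmem a haI).2, (hgmem b hbI).2] at hkey
      calc ENNReal.ofReal (ℓ * (b - a)) = ENNReal.ofReal (ℓ * b - ℓ * a) := by ring_nf
        _ ≤ eVariationOn γt (Icc a b) := hkey
  -- continuity of γt
  have hγtcont : ContinuousOn γt (Icc 0 1) := by
    intro r hr
    rw [Metric.continuousWithinAt_iff]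
    intro ε hε
    refine ⟨ε / ℓ, by positivity, fun r' hr' hd => ?_⟩
    rcases le_total r' r with h | h
    · have := hvar r' r hr'.1 h hr.2
      have hedist : edist (γt r') (γt r) ≤ ENNReal.ofReal (ℓ * (r - r')) := by
        rw [← this]
        exact eVariationOn.edist_le γt (Set.left_mem_Icc.mpr h) (Set.right_mem_Icc.mpr h)
      have : dist (γt r') (γt r) ≤ ℓ * (r - r') := by
        rw [← ENNReal.toReal_ofReal (by nlinarith : (0:ℝ) ≤ ℓ * (r - r')), dist_edist]
        exact ENNReal.toReal_mono ENNReal.ofReal_ne_top hedist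
      rw [Real.dist_eq, abs_lt] at hd
      calc dist (γt r') (γt r) ≤ ℓ * (r - r') := this
        _ < ℓ * (ε / ℓ) := by nlinarith [hd.1]
        _ = ε := by field_simp
    · have := hvar r r' hr.1 h hr'.2
      have hedist : edist (γt r) (γt r') ≤ ENNReal.ofReal (ℓ * (r' - r)) := by
        rw [← this]
        exact eVariationOn.edist_le γt (Set.left_mem_Icc.mpr h) (Set.right_mem_Icc.mpr h)
      have hdd : dist (γt r') (γt r) ≤ ℓ * (r' - r) := by
        rw [dist_comm, ← ENNReal.toReal_ofReal (by nlinarith : (0:ℝ) ≤ ℓ * (r' - r)), dist_edist]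
        exact ENNReal.toReal_mono ENNReal.ofReal_ne_top hedist
      rw [Real.dist_eq, abs_lt] at hd
      calc dist (γt r') (γt r) ≤ ℓ * (r' - r) := hdd
        _ < ℓ * (ε / ℓ) := by nlinarith [hd.2]
        _ = ε := by field_simp
  -- endpoints
  have hend0 : γt 0 = γ 0 := by
    rw [hclamp 0 ⟨le_rfl, by norm_num⟩, hg0]
  have hend1 : γt 1 = γ 1 := by
    rw [hclamp 1 ⟨by norm_num, le_rfl⟩]
    apply hflat _ _ (hgmem 1 ⟨by norm_num, le_rfl⟩).1 ⟨by norm_num, le_rfl⟩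
    rw [(hgmem 1 ⟨by norm_num, le_rfl⟩).2]
    ring
  exact ⟨γt, hγtcont, hend0, hend1, hvar⟩

lemma tmono {t : ℕ → ℝ} {n : ℕ} (h : ∀ i < n, t i < t (i+1)) :
    ∀ i j, i ≤ j → j ≤ n → t i ≤ t j := by
  intro i j hij hjn
  induction j with
  | zero => simp [Nat.le_zero.mp hij]
  | succ m ih =>
    rcases Nat.lt_or_ge i (m+1) with h1 | h1
    · exact le_trans (ih (by omega) (by omega)) (h m (by omega)).le
    · have : i = m + 1 := by omega
      rw [this]

lemma isCurveIntegral_const_speed (γt : ℝ → X) (w : X → ℝ) (ℓ : ℝ) (hℓ : 0 ≤ ℓ)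
    (hvar : ∀ a b : ℝ, 0 ≤ a → a ≤ b → b ≤ 1 →
      eVariationOn γt (Icc a b) = ENNReal.ofReal (ℓ * (b - a)))
    (hwcont : ContinuousOn (fun u => w (γt u)) (Icc 0 1)) :
    IsCurveIntegral γt w (ℓ * ∫ u in (0:ℝ)..1, w (γt u)) := by
  intro ε hε
  set ε' := ε / (ℓ + 1) with hε'
  have hε'pos : 0 < ε' := by positivity
  obtain ⟨δ, hδpos, hδ⟩ : ∃ δ > 0, ∀ x ∈ Icc (0:ℝ) 1, ∀ y ∈ Icc (0:ℝ) 1,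
      dist x y < δ → dist (w (γt x)) (w (γt y)) < ε' := by
    have hu : UniformContinuousOn (fun u => w (γt u)) (Icc 0 1) :=
      isCompact_Icc.uniformContinuousOn_of_continuous hwcont
    rw [_root_.Metric.uniformContinuousOn_iff] at hu
    obtain ⟨δ, hδpos, h⟩ := hu ε' hε'pos
    exact ⟨δ, hδpos, fun x hx y hy hd => h x hx y hy hd⟩
  refine ⟨δ, hδpos, fun n t s hn ht0 htn hstrict hmesh hs => ?_⟩
  have hmono := tmono hstrict
  have htI : ∀ i, i ≤ n → t i ∈ Icc (0:ℝ) 1 := by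
    intro i hi
    constructor
    · rw [← ht0]; exact hmono 0 i (Nat.zero_le i) hi
    · rw [← htn]; exact hmono i n hi le_rfl
  have hsI : ∀ i, i < n → s i ∈ Icc (0:ℝ) 1 := by
    intro i hi
    exact ⟨(htI i hi.le).1.trans (hs i hi).1, (hs i hi).2.trans (htI (i+1) hi).2⟩
  have hvtoReal : ∀ i < n, (eVariationOn γt (Icc (t i) (t (i+1)))).toReal
      = ℓ * (t (i+1) - t i) := by
    intro i hi
    rw [hvar (t i) (t (i+1)) (htI i hi.le).1 (hstrict i hi).le (htI (i+1) hi).2]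
    exact ENNReal.toReal_ofReal (by nlinarith [(hstrict i hi).le])
  have hint : ∀ i < n, IntervalIntegrable (fun u => w (γt u)) MeasureTheory.volume
      (t i) (t (i+1)) := by
    intro i hi
    apply ContinuousOn.intervalIntegrable
    rw [Set.uIcc_of_le (hstrict i hi).le]
    exact hwcont.mono (Set.Icc_subset_Icc (htI i hi.le).1 (htI (i+1) hi).2)
  have hsplit : ∫ u in (0:ℝ)..1, w (γt u)
      = ∑ i ∈ Finset.range n, ∫ u in (t i)..(t (i+1)), w (γt u) := by
    rw [intervalIntegral.sum_integral_adjacent_intervals hint, ht0, htn]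
  have hterm : ∀ i < n, |(∫ u in (t i)..(t (i+1)), w (γt u)) - w (γt (s i)) * (t (i+1) - t i)|
      ≤ ε' * (t (i+1) - t i) := by
    intro i hi
    have hconst : w (γt (s i)) * (t (i+1) - t i)
        = ∫ _ in (t i)..(t (i+1)), w (γt (s i)) := by
      rw [intervalIntegral.integral_const]
      simp [mul_comm]
    rw [hconst, ← intervalIntegral.integral_sub (hint i hi) intervalIntegrable_const]
    have := intervalIntegral.norm_integral_le_of_norm_le_const
      (C := ε') (f := fun u => w (γt u) - w (γt (s i))) (a := t i) (b := t (i+1)) ?_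
    · rw [Real.norm_eq_abs] at this
      calc |∫ u in (t i)..(t (i+1)), (w (γt u) - w (γt (s i)))|
          ≤ ε' * |t (i+1) - t i| := this
        _ = ε' * (t (i+1) - t i) := by rw [abs_of_nonneg (by linarith [hstrict i hi])]
    · intro u hu
      rw [Set.uIoc_of_le (hstrict i hi).le] at hu
      have huI : u ∈ Icc (0:ℝ) 1 :=
        ⟨(htI i hi.le).1.trans hu.1.le, hu.2.trans (htI (i+1) hi).2⟩
      have hd : dist u (s i) < δ := by
        rw [Real.dist_eq, abs_lt]
        have h1 := (hs i hi).1
        have h2 := (hs i hi).2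
        have h3 := hu.1
        have h4 := hu.2
        have h5 := hmesh i hi
        constructor <;> linarith
      have := hδ u huI (s i) (hsI i hi) hd
      rw [Real.dist_eq] at this
      rw [Real.norm_eq_abs]
      exact this.le
  -- assemble
  have hsum : ∑ i ∈ Finset.range n, w (γt (s i)) * (eVariationOn γt (Icc (t i) (t (i+1)))).toReal
      = ∑ i ∈ Finset.range n, w (γt (s i)) * (ℓ * (t (i+1) - t i)) := by
    apply Finset.sum_congr rfl
    intro i hi
    rw [Finset.mem_range] at hi
    rw [hvtoReal i hi]
  rw [hsum]
  have key : |ℓ * (∫ u in (0:ℝ)..1, w (γt u))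
      - ∑ i ∈ Finset.range n, w (γt (s i)) * (ℓ * (t (i+1) - t i))|
      ≤ ℓ * ε' := by
    have h1 : ℓ * (∫ u in (0:ℝ)..1, w (γt u))
        - ∑ i ∈ Finset.range n, w (γt (s i)) * (ℓ * (t (i+1) - t i))
        = ℓ * ∑ i ∈ Finset.range n,
            ((∫ u in (t i)..(t (i+1)), w (γt u)) - w (γt (s i)) * (t (i+1) - t i)) := by
      rw [Finset.mul_sum, hsplit, Finset.mul_sum]
      rw [← Finset.sum_sub_distrib]
      apply Finset.sum_congr rfl
      intro i _
      ring
    rw [h1, abs_mul, abs_of_nonneg hℓ]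
    have h2 : |∑ i ∈ Finset.range n,
        ((∫ u in (t i)..(t (i+1)), w (γt u)) - w (γt (s i)) * (t (i+1) - t i))| ≤ ε' := by
      calc |∑ i ∈ Finset.range n,
          ((∫ u in (t i)..(t (i+1)), w (γt u)) - w (γt (s i)) * (t (i+1) - t i))|
          ≤ ∑ i ∈ Finset.range n,
            |(∫ u in (t i)..(t (i+1)), w (γt u)) - w (γt (s i)) * (t (i+1) - t i)| :=
            Finset.abs_sum_le_sum_abs _ _
        _ ≤ ∑ i ∈ Finset.range n, ε' * (t (i+1) - t i) := by
            apply Finset.sum_le_sum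
            intro i hi
            rw [Finset.mem_range] at hi
            exact hterm i hi
        _ = ε' * ∑ i ∈ Finset.range n, (t (i+1) - t i) := by rw [← Finset.mul_sum]
        _ = ε' := by rw [Finset.sum_range_sub t, ht0, htn]; ring
    exact mul_le_mul_of_nonneg_left h2 hℓ
  calc |ℓ * (∫ u in (0:ℝ)..1, w (γt u))
      - ∑ i ∈ Finset.range n, w (γt (s i)) * (ℓ * (t (i+1) - t i))| ≤ ℓ * ε' := key
    _ < ε := by
      have hlt : ℓ / (ℓ + 1) < 1 := by
        rw [div_lt_one (by linarith)]
        linarith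
      calc ℓ * ε' = (ℓ / (ℓ + 1)) * ε := by rw [hε']; ring
        _ < 1 * ε := by nlinarith
        _ = ε := one_mul ε

-- uniform partition
lemma exists_fine_partition {δ : ℝ} (hδ : 0 < δ) :
    ∃ (n : ℕ) (t : ℕ → ℝ), 0 < n ∧ t 0 = 0 ∧ t n = 1 ∧ (∀ i < n, t i < t (i + 1)) ∧
      (∀ i < n, t (i + 1) - t i < δ) := by
  obtain ⟨n, hn⟩ := exists_nat_gt (1 / δ)
  have h1δ : (0:ℝ) < 1/δ := by positivity
  have hnR : (0:ℝ) < n := lt_trans h1δ hn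
  have hnpos : 0 < n := by exact_mod_cast hnR
  have hmesh : 1 / (n:ℝ) < δ := by
    rw [div_lt_iff₀ hnR]
    have := (div_lt_iff₀ hδ).mp hn
    linarith [mul_comm δ (n:ℝ)]
  refine ⟨n, fun i => (i:ℝ) / n, hnpos, by simp, by field_simp, ?_, ?_⟩
  · intro i _
    rw [div_lt_div_iff_of_pos_right hnR]
    push_cast
    linarith
  · intro i _
    have : ((i:ℝ)+1) / n - (i:ℝ) / n = 1 / n := by field_simp; ring
    push_cast
    rw [this]
    exact hmesh


lemma curveIntegral_nonneg (γ : ℝ → X) {w : X → ℝ} (hw : ∀ z, 0 < w z) {I : ℝ}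
    (h : IsCurveIntegral γ w I) : 0 ≤ I := by
  by_contra hcon
  push_neg at hcon
  obtain ⟨δ, hδ, hRS⟩ := h (-I) (by linarith)
  obtain ⟨n, t, hn, ht0, htn, hstrict, hmesh⟩ := exists_fine_partition hδ
  have := hRS n t t hn ht0 htn hstrict hmesh
    (fun i hi => ⟨le_rfl, (hstrict i hi).le⟩)
  have hsumnn : 0 ≤ ∑ i ∈ Finset.range n,
      w (γ (t i)) * (eVariationOn γ (Icc (t i) (t (i + 1)))).toReal :=
    Finset.sum_nonneg (fun i _ => mul_nonneg (hw _).le ENNReal.toReal_nonneg)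
  rw [abs_lt] at this
  linarith [this.1]

lemma f_continuousAt {f : X → Y} {w : X → ℝ} {B : ℝ} (hB0 : 0 ≤ B) (hwpos : ∀ z, 0 < w z)
    (hB : ∀ z, Dstar f z ≤ ENNReal.ofReal (B * w z)) (z : X) : ContinuousAt f z := by
  have hc : Dstar f z < ENNReal.ofReal (B * w z + 1) := by
    refine lt_of_le_of_lt (hB z) ?_
    rw [ENNReal.ofReal_lt_ofReal_iff (by nlinarith [(hwpos z)])]
    linarith
  obtain ⟨ρ, hρ, hest⟩ := loc_of_Dstar_lt hc
  set C := B * w z + 1 with hC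
  have hCpos : 0 < C := by nlinarith [hwpos z]
  have hdist : ∀ u, dist z u < ρ → dist (f z) (f u) ≤ C * dist z u := by
    intro u hu
    have h1 := hest u hu
    rw [edist_dist, edist_dist, ← ENNReal.ofReal_mul hCpos.le] at h1
    have := ENNReal.toReal_mono ENNReal.ofReal_ne_top h1
    rwa [ENNReal.toReal_ofReal dist_nonneg,
      ENNReal.toReal_ofReal (by positivity)] at this
  rw [Metric.continuousAt_iff]
  intro ε hε
  refine ⟨min ρ (ε / (C + 1)), by positivity, fun {u} hu => ?_⟩
  rw [dist_comm] at hu ⊢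
  have h1 : dist z u < ρ := lt_of_lt_of_le hu (min_le_left _ _)
  have h2 : dist z u < ε / (C + 1) := lt_of_lt_of_le hu (min_le_right _ _)
  calc dist (f z) (f u) ≤ C * dist z u := hdist u h1
    _ < ε := by
      have h4 : C * dist z u < C * (ε / (C+1)) := mul_lt_mul_of_pos_left h2 hCpos
      have h6 : C * (ε / (C+1)) ≤ ε := by
        rw [mul_comm, div_mul_eq_mul_div, div_le_iff₀ (by linarith : (0:ℝ) < C + 1)]
        nlinarith
      exact lt_of_lt_of_le h4 h6

lemma key_bound {w : X → ℝ} (hwc : Continuous w) (hwpos : ∀ z, 0 < w z)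
    {f : X → Y} {B : ℝ} (hB0 : 0 ≤ B)
    (hB : ∀ z, Dstar f z ≤ ENNReal.ofReal (B * w z))
    {x y : X} {γ : ℝ → X} {I : ℝ}
    (hcurve : IsCurveFrom γ x y) (hrect : RectifiableCurve γ)
    (hint : IsCurveIntegral γ w I) :
    innerDist (f x) (f y) ≤ B * I := by
  obtain ⟨hγc, hγ0, hγ1⟩ := hcurve
  have hIpos : 0 ≤ I := curveIntegral_nonneg γ hwpos hint
  have hfγ : ContinuousOn (f ∘ γ) (Icc 0 1) := fun t ht =>
    (f_continuousAt hB0 hwpos hB (γ t)).comp_continuousWithinAt (hγc t ht)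
  have hfin : eVariationOn γ (Icc 0 1) ≠ ⊤ := hrect
  have hfinsub : ∀ p q : ℝ, 0 ≤ p → q ≤ 1 → eVariationOn γ (Icc p q) ≠ ⊤ := by
    intro p q hp hq h
    exact hfin (top_le_iff.mp (h ▸ eVariationOn.mono γ (Set.Icc_subset_Icc hp hq)))
  apply _root_.le_of_forall_pos_le_add
  intro ε hε
  set vt := (eVariationOn γ (Icc 0 1)).toReal with hvt
  have hvt0 : 0 ≤ vt := ENNReal.toReal_nonneg
  set D := B + (B+1)*vt + 1 with hD
  have hDpos : 0 < D := by nlinarith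
  set ε' := ε / D with hε'
  have hε'pos : 0 < ε' := by positivity
  obtain ⟨δ₁, hδ₁, hRS⟩ := hint ε' hε'pos
  obtain ⟨δ₂, hδ₂, hUC⟩ : ∃ δ₂ > 0, ∀ p ∈ Icc (0:ℝ) 1, ∀ q ∈ Icc (0:ℝ) 1,
      dist p q < δ₂ → dist (w (γ p)) (w (γ q)) < ε' := by
    have hu : UniformContinuousOn (fun u => w (γ u)) (Icc 0 1) :=
      isCompact_Icc.uniformContinuousOn_of_continuous (hwc.comp_continuousOn hγc)
    rw [_root_.Metric.uniformContinuousOn_iff] at hu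
    obtain ⟨δ, hδpos, h⟩ := hu ε' hε'pos
    exact ⟨δ, hδpos, fun p hp q hq hd => h p hp q hq hd⟩
  obtain ⟨n, t, hn, ht0, htn, hstrict, hmesh⟩ := exists_fine_partition (lt_min hδ₁ hδ₂)
  have hmesh₁ : ∀ i < n, t (i+1) - t i < δ₁ :=
    fun i hi => lt_of_lt_of_le (hmesh i hi) (min_le_left _ _)
  have hmesh₂ : ∀ i < n, t (i+1) - t i < δ₂ :=
    fun i hi => lt_of_lt_of_le (hmesh i hi) (min_le_right _ _)
  have hmono := tmono hstrict
  have htI : ∀ i, i ≤ n → t i ∈ Icc (0:ℝ) 1 := by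
    intro i hi
    exact ⟨ht0 ▸ hmono 0 i (Nat.zero_le i) hi, htn ▸ hmono i n hi le_rfl⟩
  have hRSb := hRS n t t hn ht0 htn hstrict hmesh₁
    (fun i hi => ⟨le_rfl, (hstrict i hi).le⟩)
  set v : ℕ → ℝ := fun i => (eVariationOn γ (Icc (t i) (t (i+1)))).toReal with hv
  have hvnn : ∀ i, 0 ≤ v i := fun i => ENNReal.toReal_nonneg
  set c : ℕ → ℝ := fun i => B * w (γ (t i)) + (B+1) * ε' with hc
  have hcpos : ∀ i, 0 < c i := by
    intro i
    simp only [hc]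
    nlinarith [mul_nonneg hB0 (hwpos (γ (t i))).le,
      mul_pos (by linarith : (0:ℝ) < B + 1) hε'pos]
  -- each piece
  have hpiece : ∀ i < n, eVariationOn (f ∘ γ) (Icc (t i) (t (i+1)))
      ≤ ENNReal.ofReal (c i * v i) := by
    intro i hi
    have hloc : ∀ τ ∈ Icc (t i) (t (i+1)), ∃ ρ > (0:ℝ), ∀ u, dist (γ τ) u < ρ →
        edist (f (γ τ)) (f u) ≤ ENNReal.ofReal (c i) * edist (γ τ) u := by
      intro τ hτ
      have hτI : τ ∈ Icc (0:ℝ) 1 := ⟨(htI i hi.le).1.trans hτ.1, hτ.2.trans (htI (i+1) hi).2⟩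
      have hwclose : w (γ τ) < w (γ (t i)) + ε' := by
        have := hUC τ hτI (t i) (htI i hi.le) (by
          rw [Real.dist_eq, abs_lt]
          have h1 := hτ.1
          have h2 := hτ.2
          have h3 := hmesh₂ i hi
          constructor <;> linarith)
        rw [Real.dist_eq, abs_lt] at this
        linarith [this.2]
      have hlt : Dstar f (γ τ) < ENNReal.ofReal (c i) := by
        refine lt_of_le_of_lt (hB (γ τ)) ?_
        rw [ENNReal.ofReal_lt_ofReal_iff (hcpos i)]
        simp only [hc]
        nlinarith [mul_le_mul_of_nonneg_left hwclose.le hB0, hε'pos]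
      exact loc_of_Dstar_lt hlt
    have h1 := evar_comp_le f γ (hstrict i hi).le
      (hγc.mono (Set.Icc_subset_Icc (htI i hi.le).1 (htI (i+1) hi).2)) hloc
    have h2 : eVariationOn γ (Icc (t i) (t (i+1))) = ENNReal.ofReal (v i) := by
      rw [hv]
      exact (ENNReal.ofReal_toReal (hfinsub _ _ (htI i hi.le).1 (htI (i+1) hi).2)).symm
    rw [h2, ← ENNReal.ofReal_mul (hcpos i).le] at h1
    exact h1
  -- sum up
  have htotal : eVariationOn (f ∘ γ) (Icc 0 1)
      ≤ ENNReal.ofReal (∑ i ∈ Finset.range n, c i * v i) := by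
    have h1 : eVariationOn (f ∘ γ) (Icc 0 1)
        = ∑ i ∈ Finset.range n, eVariationOn (f ∘ γ) (Icc (t i) (t (i+1))) := by
      rw [evar_sum_pieces (f ∘ γ) t n (fun i hi => (hstrict i hi).le), ht0, htn]
    rw [h1, ENNReal.ofReal_sum_of_nonneg (fun i _ => mul_nonneg (hcpos i).le (hvnn i))]
    exact Finset.sum_le_sum (fun i hi => hpiece i (Finset.mem_range.mp hi))
  -- real arithmetic
  have hsumv : ∑ i ∈ Finset.range n, v i = vt := by
    have h1 : ∑ i ∈ Finset.range n, eVariationOn γ (Icc (t i) (t (i+1)))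
        = eVariationOn γ (Icc 0 1) := by
      rw [evar_sum_pieces γ t n (fun i hi => (hstrict i hi).le), ht0, htn]
    rw [hv, hvt, ← h1, ENNReal.toReal_sum]
    intro i hi
    exact hfinsub _ _ (htI i (Finset.mem_range.mp hi).le).1 (htI (i+1) (Finset.mem_range.mp hi)).2
  have hsumw : ∑ i ∈ Finset.range n, w (γ (t i)) * v i ≤ I + ε' := by
    rw [abs_lt] at hRSb
    have := hRSb.1
    linarith
  have harith : ∑ i ∈ Finset.range n, c i * v i ≤ B * I + ε := by
    have h1 : ∑ i ∈ Finset.range n, c i * v i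
        = B * (∑ i ∈ Finset.range n, w (γ (t i)) * v i) + (B+1) * ε' * vt := by
      rw [← hsumv, Finset.mul_sum, Finset.mul_sum, ← Finset.sum_add_distrib]
      apply Finset.sum_congr rfl
      intro i _
      rw [hc]
      ring
    rw [h1]
    have h2 : B * (∑ i ∈ Finset.range n, w (γ (t i)) * v i) ≤ B * (I + ε') :=
      mul_le_mul_of_nonneg_left hsumw hB0
    have h3 : ε' * D = ε := by rw [hε']; field_simp
    nlinarith [hε'pos.le]
  -- conclude
  have hVffin : eVariationOn (f ∘ γ) (Icc 0 1) ≠ ⊤ := by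
    intro h
    rw [h, top_le_iff] at htotal
    exact ENNReal.ofReal_ne_top htotal
  set L := (eVariationOn (f ∘ γ) (Icc 0 1)).toReal with hL
  have hLle : L ≤ B * I + ε := by
    have := ENNReal.toReal_mono ENNReal.ofReal_ne_top htotal
    rw [ENNReal.toReal_ofReal (by
      exact Finset.sum_nonneg (fun i _ => mul_nonneg (hcpos i).le (hvnn i)))] at this
    exact this.trans harith
  have hmem : L ∈ {L | ∃ δc : ℝ → Y, IsCurveFrom δc (f x) (f y)
      ∧ eVariationOn δc (Set.Icc 0 1) = ENNReal.ofReal L} := by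
    refine ⟨f ∘ γ, ⟨hfγ, ?_, ?_⟩, (ENNReal.ofReal_toReal hVffin).symm⟩
    · simp [Function.comp, hγ0]
    · simp [Function.comp, hγ1]
  rw [innerDist]
  by_cases hbdd : BddBelow {L | ∃ δc : ℝ → Y, IsCurveFrom δc (f x) (f y)
      ∧ eVariationOn δc (Set.Icc 0 1) = ENNReal.ofReal L}
  · exact le_trans (csInf_le hbdd hmem) hLle
  · rw [Real.sInf_of_not_bddBelow hbdd]
    nlinarith




end AuxLemmas

theorem lipschitz_wDist_innerDist {X Y : Type*} [MetricSpace X] [MetricSpace Y]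
    (w : X → ℝ) (hwc : Continuous w) (hwpos : ∀ x, 0 < w x)
    (f : X → Y) (B : ℝ) (hB0 : 0 ≤ B)
    (hB : ∀ z, Dstar f z ≤ ENNReal.ofReal (B * w z)) :
    ∀ x y : X, (∃ γ : ℝ → X, IsCurveFrom γ x y ∧ RectifiableCurve γ) →
      innerDist (f x) (f y) ≤ B * wDist w x y := by
  intro x y hexists
  obtain ⟨γ₀, hc₀, hr₀⟩ := hexists
  set S := {I | ∃ γ : ℝ → X, IsCurveFrom γ x y ∧ RectifiableCurve γ ∧ IsCurveIntegral γ w I}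
    with hS
  have hkey : ∀ I ∈ S, innerDist (f x) (f y) ≤ B * I := by
    rintro I ⟨γ, hc, hr, hi⟩
    exact key_bound hwc hwpos hB0 hB hc hr hi
  have hSne : S.Nonempty := by
    by_cases h0 : eVariationOn γ₀ (Icc 0 1) = 0
    · refine ⟨0, γ₀, hc₀, hr₀, ?_⟩
      intro ε hε
      refine ⟨1, one_pos, fun n t s hn ht0 htn hstrict hmesh hs => ?_⟩
      have hmono := tmono hstrict
      have hsum0 : ∀ i ∈ Finset.range n,
          w (γ₀ (s i)) * (eVariationOn γ₀ (Icc (t i) (t (i+1)))).toReal = 0 := by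
        intro i hi
        rw [Finset.mem_range] at hi
        have hsub : Icc (t i) (t (i+1)) ⊆ Icc (0:ℝ) 1 :=
          Set.Icc_subset_Icc (ht0 ▸ hmono 0 i (Nat.zero_le _) hi.le)
            (htn ▸ hmono (i+1) n hi le_rfl)
        have hz : eVariationOn γ₀ (Icc (t i) (t (i+1))) = 0 :=
          le_antisymm (h0 ▸ eVariationOn.mono γ₀ hsub) zero_le
        rw [hz]
        simp
      rw [Finset.sum_eq_zero hsum0]
      simpa using hε
    · obtain ⟨γt, hγtc, he0, he1, hvar⟩ := reparam γ₀ hc₀.1 hr₀ h0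
      refine ⟨(eVariationOn γ₀ (Icc 0 1)).toReal * ∫ u in (0:ℝ)..1, w (γt u),
        γt, ⟨hγtc, ?_, ?_⟩, ?_, ?_⟩
      · rw [he0, hc₀.2.1]
      · rw [he1, hc₀.2.2]
      · rw [RectifiableCurve, hvar 0 1 le_rfl zero_le_one le_rfl]
        exact ENNReal.ofReal_ne_top
      · exact isCurveIntegral_const_speed γt w _ ENNReal.toReal_nonneg hvar
          (hwc.comp_continuousOn hγtc)
  show innerDist (f x) (f y) ≤ B * sInf S
  rcases eq_or_lt_of_le hB0 with hB0' | hBpos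
  · obtain ⟨I, hI⟩ := hSne
    have := hkey I hI
    rw [← hB0'] at this ⊢
    simpa using this
  · have h1 : ∀ I ∈ S, innerDist (f x) (f y) / B ≤ I := by
      intro I hI
      rw [div_le_iff₀ hBpos, mul_comm]
      exact hkey I hI
    have h2 : innerDist (f x) (f y) / B ≤ sInf S := le_csInf hSne h1
    rw [div_le_iff₀ hBpos] at h2
    calc innerDist (f x) (f y) ≤ sInf S * B := h2
      _ = B * sInf S := mul_comm _ _
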